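/- Let μ be the limiting measure of the recursive construction. If x ∈ supp μ lies outside I_s = ((1-3^s)/2 - 1/3, (3^s-1)/2 + 1/3), then the point mass μ({x}) is at most 1/(2s). Consequently μ({λ}) → 0 as |λ| → ∞ along λ ∈ supp μ. -/

import Mathlib

open MeasureTheory
open scoped ENNReal

/-- `r k = 2^{-(k+1)^2}`. -/
noncomputable def r (k : ℕ) : ℝ := (2 : ℝ) ^ (-(((k : ℤ) + 1) ^ 2))

/-- `S t` is the shift of a measure by `t`. -/
noncomputable def S (t : ℝ) (ρ : Measure ℝ) : Measure ℝ := ρ.map (· + t)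

/-- `T k` averages the `2k` shifts by `± r_k j / k`, `j = 1, …, k`. -/
noncomputable def T (k : ℕ) (ρ : Measure ℝ) : Measure ℝ :=
  ((2 * k : ℝ≥0∞))⁻¹ •
    ∑ j ∈ Finset.Icc 1 k, (S (-(r k * j / k)) ρ + S (r k * j / k) ρ)

/-- `μ_0 = δ_0`, `μ_k = μ_{k-1} + (S_{-3^{k-1}} + S_{3^{k-1}}) T_k μ_{k-1}`. -/
noncomputable def μseq : ℕ → Measure ℝ
  | 0 => Measure.dirac 0
  | k + 1 => μseq k +
      (S (-(3 ^ k : ℝ)) (T (k + 1) (μseq k)) + S ((3 ^ k : ℝ)) (T (k + 1) (μseq k)))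

/-- The interval `I_s = ((1-3^s)/2 - 1/3, (3^s-1)/2 + 1/3)`. -/
noncomputable def I (s : ℕ) : Set ℝ :=
  Set.Ioo ((1 - 3 ^ s) / 2 - 1 / 3) ((3 ^ s - 1) / 2 + 1 / 3)

open Filter

/-! ### Auxiliary development -/

/-- Outer radius of the support of `μseq t`. -/
noncomputable def mm : ℕ → ℝ
  | 0 => 0
  | t + 1 => 3 ^ t + mm t + r (t + 1)

lemma r_pos (k : ℕ) : 0 < r k := by
  unfold r; positivity

lemma r_le_pow (k : ℕ) : r k ≤ (1 / 16 : ℝ) ^ k := by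
  have h1 : r k ≤ (2 : ℝ) ^ (-(4 * (k : ℤ))) := by
    apply zpow_le_zpow_right₀ one_le_two
    nlinarith [sq_nonneg ((k : ℤ) - 1)]
  have h2 : (2 : ℝ) ^ (-(4 * (k : ℤ))) = (1 / 16 : ℝ) ^ k := by
    rw [show (-(4 * (k : ℤ))) = 4 * (-(k : ℤ)) by ring, zpow_mul]
    norm_num
    rw [one_div, inv_pow]
  linarith [h1, h2.le, h2.ge]

lemma r_succ_le (k : ℕ) : r (k + 1) ≤ 1 / 16 := by
  have h1 := r_le_pow (k + 1)
  have h2 : ((1 : ℝ) / 16) ^ (k + 1) ≤ (1 / 16 : ℝ) ^ 1 :=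
    pow_le_pow_of_le_one (by norm_num) (by norm_num) (by omega)
  simpa using h1.trans h2

lemma mm_nonneg : ∀ t : ℕ, 0 ≤ mm t
  | 0 => le_refl 0
  | t + 1 => by
      have h1 := mm_nonneg t
      have h2 := (r_pos (t + 1)).le
      have h3 : (0 : ℝ) ≤ 3 ^ t := by positivity
      show 0 ≤ 3 ^ t + mm t + r (t + 1)
      linarith

lemma mm_mono (t : ℕ) : mm t ≤ mm (t + 1) := by
  have h2 := (r_pos (t + 1)).le
  have h3 : (0 : ℝ) ≤ 3 ^ t := by positivity
  show mm t ≤ 3 ^ t + mm t + r (t + 1)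
  linarith

lemma mm_bound : ∀ t : ℕ, mm t + (1 / 15) * (1 / 16 : ℝ) ^ t ≤ ((3 : ℝ) ^ t - 1) / 2 + 1 / 15 := by
  intro t
  induction t with
  | zero => norm_num [mm]
  | succ t ih =>
      have hr := r_le_pow (t + 1)
      rw [pow_succ (3 : ℝ) t, pow_succ (1 / 16 : ℝ) t]
      rw [pow_succ (1 / 16 : ℝ) t] at hr
      show 3 ^ t + mm t + r (t + 1) + _ ≤ _
      linarith

lemma mm_le (t : ℕ) : mm t ≤ ((3 : ℝ) ^ t - 1) / 2 + 1 / 15 := by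
  have h1 := mm_bound t
  have h2 : (0 : ℝ) < (1 / 16 : ℝ) ^ t := by positivity
  linarith

lemma key (t : ℕ) : 2 * mm t + 1 / 3 + r (t + 1) < (3 : ℝ) ^ t := by
  have h1 := mm_le t
  have h2 := r_succ_le t
  have h3 : (1 : ℝ) ≤ 3 ^ t := one_le_pow₀ (by norm_num)
  linarith

lemma delta_pos (k : ℕ) {j : ℕ} (hj : j ∈ Finset.Icc 1 k) : 0 < r k * j / k := by
  rw [Finset.mem_Icc] at hj
  have h1 : 0 < (j : ℝ) := by exact_mod_cast hj.1
  have h2 : 0 < (k : ℝ) := by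
    have : 1 ≤ k := le_trans hj.1 hj.2
    exact_mod_cast this
  have := r_pos k
  positivity

lemma delta_le (k : ℕ) {j : ℕ} (hj : j ∈ Finset.Icc 1 k) : r k * j / k ≤ r k := by
  rw [Finset.mem_Icc] at hj
  have h2 : 0 < (k : ℝ) := by
    have : 1 ≤ k := le_trans hj.1 hj.2
    exact_mod_cast this
  have hjk : (j : ℝ) ≤ k := by exact_mod_cast hj.2
  rw [div_le_iff₀ h2]
  nlinarith [r_pos k]

lemma S_apply (c : ℝ) (ρ : Measure ℝ) {A : Set ℝ} (hA : MeasurableSet A) :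
    S c ρ A = ρ ((· + c) ⁻¹' A) :=
  Measure.map_apply (measurable_add_const c) hA

lemma ST_apply (t : ℕ) (c : ℝ) (ρ : Measure ℝ) {A : Set ℝ} (hA : MeasurableSet A) :
    S c (T (t + 1) ρ) A
      = (2 * ((t + 1 : ℕ) : ℝ≥0∞))⁻¹ * ∑ j ∈ Finset.Icc 1 (t + 1),
          (ρ {y : ℝ | y + -(r (t + 1) * j / ((t + 1 : ℕ) : ℝ)) + c ∈ A}
            + ρ {y : ℝ | y + (r (t + 1) * j / ((t + 1 : ℕ) : ℝ)) + c ∈ A}) := by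
  rw [S_apply c _ hA]
  have hA' : MeasurableSet ((· + c) ⁻¹' A) := hA.preimage (measurable_add_const c)
  rw [T, Measure.smul_apply, Measure.finset_sum_apply]
  simp only [Measure.add_apply, smul_eq_mul]
  congr 1
  apply Finset.sum_congr rfl
  intro j _
  rw [S_apply _ _ hA', S_apply _ _ hA']
  rfl

lemma mu_succ_apply (t : ℕ) {A : Set ℝ} (hA : MeasurableSet A) :
    μseq (t + 1) A = μseq t A + S (-(3 ^ t : ℝ)) (T (t + 1) (μseq t)) A
      + S ((3 ^ t : ℝ)) (T (t + 1) (μseq t)) A := by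
  have h : μseq (t + 1) = μseq t
      + (S (-(3 ^ t : ℝ)) (T (t + 1) (μseq t)) + S ((3 ^ t : ℝ)) (T (t + 1) (μseq t))) := rfl
  rw [h]
  simp [Measure.add_apply, add_assoc]

lemma supp : ∀ t : ℕ, μseq t (Set.Icc (-(mm t)) (mm t))ᶜ = 0 := by
  intro t
  induction t with
  | zero =>
      have h : μseq 0 = Measure.dirac 0 := rfl
      rw [h, Measure.dirac_apply' _ measurableSet_Icc.compl]
      simp [mm]
  | succ t ih =>
      have hA : MeasurableSet (Set.Icc (-(mm (t + 1))) (mm (t + 1)))ᶜ := measurableSet_Icc.compl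
      rw [mu_succ_apply t hA]
      have hsub : Set.Icc (-(mm t)) (mm t) ⊆ Set.Icc (-(mm (t + 1))) (mm (t + 1)) :=
        Set.Icc_subset_Icc (neg_le_neg (mm_mono t)) (mm_mono t)
      have h0 : μseq t (Set.Icc (-(mm (t + 1))) (mm (t + 1)))ᶜ = 0 :=
        measure_mono_null (Set.compl_subset_compl.mpr hsub) ih
      have hz : ∀ c : ℝ, |c| = 3 ^ t →
          S c (T (t + 1) (μseq t)) (Set.Icc (-(mm (t + 1))) (mm (t + 1)))ᶜ = 0 := by
        intro c hc
        rw [ST_apply t c _ hA]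
        have hterm : ∀ d : ℝ, |d| ≤ r (t + 1) →
            μseq t {y : ℝ | y + d + c ∈ (Set.Icc (-(mm (t + 1))) (mm (t + 1)))ᶜ} = 0 := by
          intro d hd
          refine measure_mono_null ?_ ih
          intro y hy
          simp only [Set.mem_setOf_eq, Set.mem_compl_iff, Set.mem_Icc, not_and_or, not_le] at hy ⊢
          have habs : mm (t + 1) < |y + d + c| := by
            rcases hy with h | h
            · rcases abs_cases (y + d + c) with ⟨he, _⟩ | ⟨he, _⟩ <;> linarith
            · rcases abs_cases (y + d + c) with ⟨he, _⟩ | ⟨he, _⟩ <;> linarith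
          have hd' := abs_le.mp hd
          have hy' : mm t < |y| := by
            have h1 : |y + d + c| ≤ |y| + |d| + |c| := by
              calc |y + d + c| ≤ |y + d| + |c| := abs_add_le _ _
                _ ≤ |y| + |d| + |c| := by linarith [abs_add_le y d]
            have h2 : mm (t + 1) = 3 ^ t + mm t + r (t + 1) := rfl
            rw [hc] at h1
            linarith
          rcases abs_cases y with ⟨he, _⟩ | ⟨he, _⟩
          · right; linarith
          · left; linarith
        rw [Finset.sum_eq_zero, mul_zero]
        intro j hj
        rw [hterm _ (by
              rw [abs_neg, abs_of_pos (delta_pos (t + 1) hj)]; exact delta_le (t + 1) hj),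
            hterm _ (by rw [abs_of_pos (delta_pos (t + 1) hj)]; exact delta_le (t + 1) hj)]
        simp
      rw [h0, hz _ (by rw [abs_neg]; exact abs_of_nonneg (by positivity)),
        hz _ (abs_of_nonneg (by positivity))]
      simp

lemma atom_zero (t : ℕ) {x : ℝ} (hx : mm t < |x|) : μseq t {x} = 0 := by
  refine measure_mono_null ?_ (supp t)
  intro y hy
  rw [Set.mem_singleton_iff] at hy
  subst hy
  simp only [Set.mem_compl_iff, Set.mem_Icc, not_and_or, not_le]
  rcases abs_cases y with ⟨he, _⟩ | ⟨he, _⟩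
  · right; linarith
  · left; linarith

lemma ST_zero (t : ℕ) (c : ℝ) {A : Set ℝ} (hA : MeasurableSet A)
    (h : ∀ y d : ℝ, |d| ≤ r (t + 1) → y + d + c ∈ A → mm t < |y|) :
    S c (T (t + 1) (μseq t)) A = 0 := by
  rw [ST_apply t c _ hA]
  have hterm : ∀ d : ℝ, |d| ≤ r (t + 1) → μseq t {y : ℝ | y + d + c ∈ A} = 0 := by
    intro d hd
    refine measure_mono_null ?_ (supp t)
    intro y hy
    have := h y d hd hy
    simp only [Set.mem_compl_iff, Set.mem_Icc, not_and_or, not_le]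
    rcases abs_cases y with ⟨he, _⟩ | ⟨he, _⟩
    · right; linarith
    · left; linarith
  rw [Finset.sum_eq_zero, mul_zero]
  intro j hj
  rw [hterm _ (by rw [abs_neg, abs_of_pos (delta_pos (t + 1) hj)]; exact delta_le (t + 1) hj),
      hterm _ (by rw [abs_of_pos (delta_pos (t + 1) hj)]; exact delta_le (t + 1) hj)]
  simp

lemma ST_le_one (t : ℕ) (c a b : ℝ) (hab : b ≤ a + 1 / 3)
    (IH : ∀ a' b' : ℝ, b' ≤ a' + 1 / 3 → μseq t (Set.Icc a' b') ≤ 1) :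
    S c (T (t + 1) (μseq t)) (Set.Icc a b) ≤ 1 := by
  rw [ST_apply t c _ measurableSet_Icc]
  have hset : ∀ d : ℝ, {y : ℝ | y + d + c ∈ Set.Icc a b} = Set.Icc (a - d - c) (b - d - c) := by
    intro d; ext y
    simp only [Set.mem_setOf_eq, Set.mem_Icc]
    constructor <;> intro h <;> exact ⟨by linarith [h.1], by linarith [h.2]⟩
  have hterm : ∀ d : ℝ, μseq t {y : ℝ | y + d + c ∈ Set.Icc a b} ≤ 1 := by
    intro d; rw [hset]; exact IH _ _ (by linarith)
  have hsum : ∑ j ∈ Finset.Icc 1 (t + 1),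
      (μseq t {y : ℝ | y + -(r (t + 1) * j / ((t + 1 : ℕ) : ℝ)) + c ∈ Set.Icc a b}
        + μseq t {y : ℝ | y + (r (t + 1) * j / ((t + 1 : ℕ) : ℝ)) + c ∈ Set.Icc a b})
      ≤ ∑ _j ∈ Finset.Icc 1 (t + 1), ((1 : ℝ≥0∞) + 1) :=
    Finset.sum_le_sum fun j _ => add_le_add (hterm _) (hterm _)
  have hcard : ∑ _j ∈ Finset.Icc 1 (t + 1), ((1 : ℝ≥0∞) + 1) = 2 * ((t + 1 : ℕ) : ℝ≥0∞) := by
    rw [Finset.sum_const, Nat.card_Icc]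
    simp only [Nat.add_sub_cancel, nsmul_eq_mul]
    ring
  calc (2 * ((t + 1 : ℕ) : ℝ≥0∞))⁻¹ * _
      ≤ (2 * ((t + 1 : ℕ) : ℝ≥0∞))⁻¹ * (2 * ((t + 1 : ℕ) : ℝ≥0∞)) := by
        rw [← hcard]; exact mul_le_mul_right hsum _
    _ = 1 := ENNReal.inv_mul_cancel (by simp)
        (ENNReal.mul_ne_top (by norm_num) (ENNReal.natCast_ne_top _))

lemma Icc_le_one : ∀ t : ℕ, ∀ a b : ℝ, b ≤ a + 1 / 3 → μseq t (Set.Icc a b) ≤ 1 := by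
  intro t
  induction t with
  | zero =>
      intro a b _
      have h : μseq 0 (Set.Icc a b) ≤ μseq 0 Set.univ := measure_mono (Set.subset_univ _)
      have h2 : μseq 0 Set.univ = 1 := by
        have h0 : μseq 0 = Measure.dirac 0 := rfl
        rw [h0]; simp
      rw [h2] at h; exact h
  | succ t IH =>
      intro a b hab
      rw [mu_succ_apply t measurableSet_Icc]
      have hkey := key t
      have hr1 := r_pos (t + 1)
      have hr2 := r_succ_le t
      have hm0 := mm_nonneg t
      have h3 : (1 : ℝ) ≤ 3 ^ t := one_le_pow₀ (by norm_num)
      rcases lt_or_ge (mm t) a with h1 | h1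
      · -- interval to the right of the central support
        have hG0 : μseq t (Set.Icc a b) = 0 := by
          refine measure_mono_null ?_ (supp t)
          intro y hy
          rw [Set.mem_Icc] at hy
          simp only [Set.mem_compl_iff, Set.mem_Icc, not_and_or, not_le]
          right; linarith [hy.1]
        have hGm : S (-(3 ^ t : ℝ)) (T (t + 1) (μseq t)) (Set.Icc a b) = 0 := by
          refine ST_zero t _ measurableSet_Icc ?_
          intro y d hd hy
          rw [Set.mem_Icc] at hy
          have hd' := abs_le.mp hd
          have : mm t < y := by linarith [hy.1]
          rcases abs_cases y with ⟨he, _⟩ | ⟨he, _⟩ <;> linarith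
        have hGp := ST_le_one t (3 ^ t) a b hab IH
        rw [hG0, hGm]; simpa using hGp
      rcases lt_or_ge b (-(mm t)) with h2 | h2
      · -- interval to the left of the central support
        have hG0 : μseq t (Set.Icc a b) = 0 := by
          refine measure_mono_null ?_ (supp t)
          intro y hy
          rw [Set.mem_Icc] at hy
          simp only [Set.mem_compl_iff, Set.mem_Icc, not_and_or, not_le]
          left; linarith [hy.2]
        have hGp : S ((3 ^ t : ℝ)) (T (t + 1) (μseq t)) (Set.Icc a b) = 0 := by
          refine ST_zero t _ measurableSet_Icc ?_
          intro y d hd hy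
          rw [Set.mem_Icc] at hy
          have hd' := abs_le.mp hd
          have : y < -(mm t) := by linarith [hy.2]
          rcases abs_cases y with ⟨he, _⟩ | ⟨he, _⟩ <;> linarith
        have hGm := ST_le_one t (-(3 ^ t)) a b hab IH
        rw [hG0, hGp]; simpa using hGm
      · -- middle case
        have hG0 := IH a b hab
        have hGm : S (-(3 ^ t : ℝ)) (T (t + 1) (μseq t)) (Set.Icc a b) = 0 := by
          refine ST_zero t _ measurableSet_Icc ?_
          intro y d hd hy
          rw [Set.mem_Icc] at hy
          have hd' := abs_le.mp hd
          have : mm t < y := by linarith [hy.1]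
          rcases abs_cases y with ⟨he, _⟩ | ⟨he, _⟩ <;> linarith
        have hGp : S ((3 ^ t : ℝ)) (T (t + 1) (μseq t)) (Set.Icc a b) = 0 := by
          refine ST_zero t _ measurableSet_Icc ?_
          intro y d hd hy
          rw [Set.mem_Icc] at hy
          have hd' := abs_le.mp hd
          have : y < -(mm t) := by linarith [hy.2]
          rcases abs_cases y with ⟨he, _⟩ | ⟨he, _⟩ <;> linarith
        rw [hGm, hGp]; simpa using hG0

lemma finset_meas (ν : Measure ℝ) (s : Finset ℝ) : ∑ b ∈ s, ν {b} = ν ↑s := by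
  simpa using
    MeasureTheory.sum_measure_preimage_singleton (μ := ν) s (f := id)
      (fun y _ => by simpa using MeasurableSet.singleton y)

lemma ST_atom (t : ℕ) (c x : ℝ) :
    S c (T (t + 1) (μseq t)) {x} ≤ (2 * ((t + 1 : ℕ) : ℝ≥0∞))⁻¹ := by
  rw [ST_apply t c _ (measurableSet_singleton x)]
  have hset : ∀ d : ℝ, {y : ℝ | y + d + c ∈ ({x} : Set ℝ)} = {x - c - d} := by
    intro d; ext y
    simp only [Set.mem_setOf_eq, Set.mem_singleton_iff]
    constructor <;> intro h <;> linarith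
  simp only [hset]
  set s := Finset.Icc 1 (t + 1) with hs
  set y0 := x - c with hy0
  have hr1 := r_pos (t + 1)
  have hrt : (0:ℝ) < (t:ℝ) + 1 := by positivity
  -- the two finsets of atoms
  set Fp : Finset ℝ := s.image (fun j : ℕ => y0 - -(r (t + 1) * j / ((t + 1 : ℕ) : ℝ))) with hFp
  set Fm : Finset ℝ := s.image (fun j : ℕ => y0 - (r (t + 1) * j / ((t + 1 : ℕ) : ℝ))) with hFm
  have hrne : r (t + 1) ≠ 0 := ne_of_gt hr1
  have hTpos : (0 : ℝ) < ((t + 1 : ℕ) : ℝ) := by positivity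
  have hTne : (((t + 1 : ℕ)) : ℝ) ≠ 0 := ne_of_gt hTpos
  have hinj : ∀ j ∈ s, ∀ i ∈ s,
      r (t + 1) * (j : ℝ) / ((t + 1 : ℕ) : ℝ) = r (t + 1) * (i : ℝ) / ((t + 1 : ℕ) : ℝ) →
        j = i := by
    intro j _ i _ h
    rw [div_eq_div_iff hTne hTne] at h
    have h2 : (j : ℝ) = (i : ℝ) := by
      have := mul_right_cancel₀ hTne h
      exact mul_left_cancel₀ hrne this
    exact_mod_cast h2
  have hsum1 : ∑ j ∈ s, μseq t {y0 - -(r (t + 1) * j / ((t + 1 : ℕ) : ℝ))} = μseq t ↑Fp := by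
    have him := Finset.sum_image (s := s) (f := fun p : ℝ => μseq t {p})
      (g := fun j : ℕ => y0 - -(r (t + 1) * (j : ℝ) / ((t + 1 : ℕ) : ℝ)))
      (fun j hj i hi h => hinj j hj i hi (by dsimp only at h; linarith))
    rw [hFp, ← finset_meas]
    exact him.symm
  have hsum2 : ∑ j ∈ s, μseq t {y0 - (r (t + 1) * j / ((t + 1 : ℕ) : ℝ))} = μseq t ↑Fm := by
    have him := Finset.sum_image (s := s) (f := fun p : ℝ => μseq t {p})
      (g := fun j : ℕ => y0 - (r (t + 1) * (j : ℝ) / ((t + 1 : ℕ) : ℝ)))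
      (fun j hj i hi h => hinj j hj i hi (by dsimp only at h; linarith))
    rw [hFm, ← finset_meas]
    exact him.symm
  have hFpmem : ∀ p ∈ Fp, y0 < p ∧ p ≤ y0 + r (t + 1) := by
    intro p hp
    rw [hFp, Finset.mem_image] at hp
    obtain ⟨j, hj, hpj⟩ := hp
    have h1 := delta_pos (t + 1) hj
    have h2 := delta_le (t + 1) hj
    rw [← hpj]
    exact ⟨by linarith, by linarith⟩
  have hFmmem : ∀ p ∈ Fm, y0 - r (t + 1) ≤ p ∧ p < y0 := by
    intro p hp
    rw [hFm, Finset.mem_image] at hp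
    obtain ⟨j, hj, hpj⟩ := hp
    have h1 := delta_pos (t + 1) hj
    have h2 := delta_le (t + 1) hj
    rw [← hpj]
    exact ⟨by linarith, by linarith⟩
  have hdisj : Disjoint (↑Fp : Set ℝ) (↑Fm : Set ℝ) := by
    rw [Set.disjoint_left]
    intro p hp hm
    have h1 := (hFpmem p (by exact_mod_cast hp)).1
    have h2 := (hFmmem p (by exact_mod_cast hm)).2
    linarith
  have hunion : (↑Fp : Set ℝ) ∪ ↑Fm ⊆ Set.Icc (y0 - r (t + 1)) (y0 + r (t + 1)) := by
    intro p hp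
    rcases hp with hp | hp
    · have := hFpmem p (by exact_mod_cast hp)
      exact ⟨by linarith [this.1], this.2⟩
    · have := hFmmem p (by exact_mod_cast hp)
      exact ⟨this.1, by linarith [this.2]⟩
  have hbound : μseq t ↑Fp + μseq t ↑Fm ≤ 1 := by
    rw [← measure_union hdisj (Fm.finite_toSet.measurableSet)]
    refine le_trans (measure_mono hunion) ?_
    refine Icc_le_one t _ _ ?_
    have := r_succ_le t
    linarith
  have hsum : ∑ j ∈ s, (μseq t {y0 - -(r (t + 1) * j / ((t + 1 : ℕ) : ℝ))}
      + μseq t {y0 - (r (t + 1) * j / ((t + 1 : ℕ) : ℝ))}) ≤ 1 := by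
    rw [Finset.sum_add_distrib, hsum1, hsum2]
    exact hbound
  calc (2 * ((t + 1 : ℕ) : ℝ≥0∞))⁻¹ * _
      ≤ (2 * ((t + 1 : ℕ) : ℝ≥0∞))⁻¹ * 1 := mul_le_mul_right hsum _
    _ = (2 * ((t + 1 : ℕ) : ℝ≥0∞))⁻¹ := mul_one _

lemma atom_small (s : ℕ) :
    ∀ t : ℕ, s ≤ t → ∀ x : ℝ, mm s < |x| → μseq t {x} ≤ (2 * ((s + 1 : ℕ) : ℝ≥0∞))⁻¹ := by
  refine Nat.le_induction ?_ ?_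
  · intro x hx
    rw [atom_zero s hx]
    exact zero_le
  · intro t hst IH x hx
    rw [mu_succ_apply t (measurableSet_singleton x)]
    have hkey := key t
    have hr1 := r_pos (t + 1)
    have hr2 := r_succ_le t
    have hm0 := mm_nonneg t
    have h3 : (1 : ℝ) ≤ 3 ^ t := one_le_pow₀ (by norm_num)
    have hmono : (2 * ((t + 1 : ℕ) : ℝ≥0∞))⁻¹ ≤ (2 * ((s + 1 : ℕ) : ℝ≥0∞))⁻¹ := by
      apply ENNReal.inv_le_inv'
      exact mul_le_mul_right (Nat.cast_le.mpr (by omega)) 2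
    rcases lt_or_ge (mm t) x with h1 | h1
    · have h0 : μseq t {x} = 0 := atom_zero t (by
        rcases abs_cases x with ⟨he, _⟩ | ⟨he, _⟩ <;> linarith)
      have hm : S (-(3 ^ t : ℝ)) (T (t + 1) (μseq t)) {x} = 0 := by
        refine ST_zero t _ (measurableSet_singleton x) ?_
        intro y d hd hy
        rw [Set.mem_singleton_iff] at hy
        have hd' := abs_le.mp hd
        have : mm t < y := by linarith
        rcases abs_cases y with ⟨he, _⟩ | ⟨he, _⟩ <;> linarith
      have hp := ST_atom t (3 ^ t) x
      rw [h0, hm]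
      simpa using hp.trans hmono
    rcases lt_or_ge x (-(mm t)) with h2 | h2
    · have h0 : μseq t {x} = 0 := atom_zero t (by
        rcases abs_cases x with ⟨he, _⟩ | ⟨he, _⟩ <;> linarith)
      have hp : S ((3 ^ t : ℝ)) (T (t + 1) (μseq t)) {x} = 0 := by
        refine ST_zero t _ (measurableSet_singleton x) ?_
        intro y d hd hy
        rw [Set.mem_singleton_iff] at hy
        have hd' := abs_le.mp hd
        have : y < -(mm t) := by linarith
        rcases abs_cases y with ⟨he, _⟩ | ⟨he, _⟩ <;> linarith
      have hm := ST_atom t (-(3 ^ t)) x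
      rw [h0, hp]
      simpa using hm.trans hmono
    · -- |x| ≤ mm t
      have hm : S (-(3 ^ t : ℝ)) (T (t + 1) (μseq t)) {x} = 0 := by
        refine ST_zero t _ (measurableSet_singleton x) ?_
        intro y d hd hy
        rw [Set.mem_singleton_iff] at hy
        have hd' := abs_le.mp hd
        have : mm t < y := by linarith
        rcases abs_cases y with ⟨he, _⟩ | ⟨he, _⟩ <;> linarith
      have hp : S ((3 ^ t : ℝ)) (T (t + 1) (μseq t)) {x} = 0 := by
        refine ST_zero t _ (measurableSet_singleton x) ?_
        intro y d hd hy
        rw [Set.mem_singleton_iff] at hy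
        have hd' := abs_le.mp hd
        have : y < -(mm t) := by linarith
        rcases abs_cases y with ⟨he, _⟩ | ⟨he, _⟩ <;> linarith
      rw [hm, hp]
      simpa using IH x hx

/-- If `μ` is the limit measure, then every point mass of `μ` outside `I_s` is at most
`1/(2s)`; consequently the point masses tend to `0` at infinity. -/
theorem mu_limit_point_masses_small (μ : Measure ℝ)
    (hμ : ∀ s : ℕ, μ.restrict (I s) = μseq s) :
    (∀ s : ℕ, 1 ≤ s → ∀ x : ℝ, x ∉ I s → μ {x} ≤ (1 : ℝ≥0∞) / (2 * s)) ∧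
    Tendsto (fun x : ℝ => μ {x}) (cocompact ℝ) (nhds 0) := by
  have H1 : ∀ s : ℕ, 1 ≤ s → ∀ x : ℝ, x ∉ I s →
      μ {x} ≤ (2 * ((s + 1 : ℕ) : ℝ≥0∞))⁻¹ := by
    intro s hs x hx
    have hxb : ((3 : ℝ) ^ s - 1) / 2 + 1 / 3 ≤ |x| := by
      rw [I, Set.mem_Ioo, not_and_or, not_lt, not_lt] at hx
      rcases hx with h | h
      · exact le_abs.mpr (Or.inr (by linarith))
      · exact le_abs.mpr (Or.inl h)
    have hms : mm s < |x| := by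
      have := mm_le s
      linarith
    obtain ⟨n, hn⟩ := pow_unbounded_of_one_lt (|x| * 2 + 1) (by norm_num : (1 : ℝ) < 3)
    set t := max s n with ht
    have hst : s ≤ t := le_max_left _ _
    have h3n : (3 : ℝ) ^ n ≤ 3 ^ t := pow_le_pow_right₀ (by norm_num) (le_max_right _ _)
    have hxlt : |x| < ((3 : ℝ) ^ t - 1) / 2 + 1 / 3 := by linarith
    have hxt : x ∈ I t := by
      rw [I, Set.mem_Ioo]
      have := abs_lt.mp hxlt
      exact ⟨by linarith [this.1], by linarith [this.2]⟩
    have hres : μ {x} = μseq t {x} := by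
      rw [← hμ t, Measure.restrict_apply (measurableSet_singleton x),
        Set.inter_eq_left.mpr (Set.singleton_subset_iff.mpr hxt)]
    rw [hres]
    exact atom_small s t hst x hms
  constructor
  · intro s hs x hx
    refine (H1 s hs x hx).trans ?_
    rw [one_div]
    apply ENNReal.inv_le_inv'
    exact mul_le_mul_right (Nat.cast_le.mpr (Nat.le_succ s)) 2
  · rw [ENNReal.tendsto_nhds_zero]
    intro ε hε
    obtain ⟨n, hn⟩ := ENNReal.exists_inv_nat_lt (ne_of_gt hε)
    set s := n + 1 with hs
    have hbound : (2 * ((s + 1 : ℕ) : ℝ≥0∞))⁻¹ ≤ ε := by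
      refine le_trans ?_ hn.le
      apply ENNReal.inv_le_inv'
      calc ((n : ℕ) : ℝ≥0∞) ≤ ((2 * (s + 1) : ℕ) : ℝ≥0∞) := Nat.cast_le.mpr (by omega)
        _ = 2 * ((s + 1 : ℕ) : ℝ≥0∞) := by push_cast; ring
    rw [Filter.eventually_iff, Filter.mem_cocompact]
    refine ⟨Set.Icc ((1 - 3 ^ s) / 2 - 1 / 3) ((3 ^ s - 1) / 2 + 1 / 3), isCompact_Icc, ?_⟩
    intro x hxc
    have hx : x ∉ I s := fun h => hxc (Set.Ioo_subset_Icc_self h)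
    exact le_trans (H1 s (by omega) x hx) hbound
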